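/- arXiv:2208.09294 — 3 statements merged into one kernel-verified Lean document; each statement's English description precedes it below -/
import Mathlib

section
/- Let A be a finite alphabet and P a Borel probability measure on A^ℕ, and equip A^ℕ with the symbolic metric d(x,y) = exp(−inf{i ≥ 0 : x_i ≠ y_i}) (with d(x,y) = 0 if x = y). Fix q > 1 and assume that the Rényi entropy H_q of P exists. Then the generalized dimension of order q of P with respect to d exists and equals H_q, i.e. lim_{r→0} log(∫_{A^ℕ} P(B(y,r))^{q−1} dP(y))/((q−1) log r) = H_q, where B(y,r) is the open ball of radius r centered at y. -/
open MeasureTheory Filter Set Topology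

namespace Stmt8

open scoped Classical

/-- The cylinder set of length `k` determined by a word `w`. -/
def cyl {A : Type*} {k : ℕ} (w : Fin k → A) : Set (ℕ → A) :=
  {x | ∀ i : Fin k, x (i : ℕ) = w i}

/-- The symbolic distance `d(x,y) = exp(-inf{i ≥ 0 : x_i ≠ y_i})`, with `d(x,y) = 0` if
`x = y`. -/
noncomputable def sdist {A : Type*} (x y : ℕ → A) : ℝ :=
  if x = y then 0 else Real.exp (-(sInf {i : ℕ | x i ≠ y i} : ℕ))

/-- The open ball of radius `r` centered at `y` for the symbolic distance. -/
def sball {A : Type*} (y : ℕ → A) (r : ℝ) : Set (ℕ → A) := {x | sdist x y < r}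

lemma cyl_measurable {A : Type*} [MeasurableSpace A] [MeasurableSingletonClass A]
    {k : ℕ} (w : Fin k → A) : MeasurableSet (cyl w) := by
  have h : cyl w = ⋂ i : Fin k, (fun x : ℕ → A => x (i : ℕ)) ⁻¹' {w i} := by
    ext x; simp [cyl]
  rw [h]
  exact MeasurableSet.iInter fun i => (measurable_pi_apply _) (measurableSet_singleton _)

lemma sball_eq_cyl {A : Type*} (y : ℕ → A) {r : ℝ} (h0 : 0 < r) (h1 : r < 1) :
    sball y r = cyl (fun i : Fin (⌊-Real.log r⌋₊ + 1) => y (i : ℕ)) := by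
  have hlr : 0 < -Real.log r := by have := Real.log_neg h0 h1; linarith
  ext x
  simp only [sball, sdist, cyl, mem_setOf_eq]
  by_cases hxy : x = y
  · subst hxy; simp [h0]
  · simp only [if_neg hxy]
    have hne : {i : ℕ | x i ≠ y i}.Nonempty := by
      rcases Function.ne_iff.mp hxy with ⟨i, hi⟩
      exact ⟨i, hi⟩
    set N := sInf {i : ℕ | x i ≠ y i} with hNdef
    have hNmem : x N ≠ y N := Nat.sInf_mem hne
    have hexp : Real.exp (-(N : ℝ)) < r ↔ -Real.log r < (N : ℝ) := by
      rw [← Real.exp_log h0, Real.exp_lt_exp, Real.exp_log h0]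
      constructor <;> intro h <;> linarith
    constructor
    · intro hlt i
      have hN : ⌊-Real.log r⌋₊ < N := (Nat.floor_lt hlr.le).mpr (hexp.mp hlt)
      have : (i : ℕ) < N := lt_of_lt_of_le i.isLt hN
      by_contra hcon
      exact absurd (Nat.sInf_le (show (i : ℕ) ∈ {i : ℕ | x i ≠ y i} from hcon)) (not_le.mpr this)
    · intro hall
      have hkN : ⌊-Real.log r⌋₊ + 1 ≤ N := by
        by_contra hcon
        push_neg at hcon
        exact hNmem (hall ⟨N, hcon⟩)
      refine hexp.mpr (lt_of_lt_of_le (Nat.lt_floor_add_one _) ?_)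
      exact_mod_cast Nat.cast_le.mpr hkN

lemma integral_sball {A : Type*} [Fintype A] [MeasurableSpace A] [MeasurableSingletonClass A]
    (P : Measure (ℕ → A)) [IsProbabilityMeasure P] (s : ℝ) {r : ℝ} (h0 : 0 < r) (h1 : r < 1) :
    ∫ y, (P (sball y r)).toReal ^ s ∂P
      = ∑ w : Fin (⌊-Real.log r⌋₊ + 1) → A,
          (P (cyl w)).toReal ^ s * (P (cyl w)).toReal := by
  set k := ⌊-Real.log r⌋₊ + 1 with hk
  have key : ∀ y : ℕ → A, (P (sball y r)).toReal ^ s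
      = ∑ w : Fin k → A, (cyl w).indicator (fun _ => (P (cyl w)).toReal ^ s) y := by
    intro y
    rw [Finset.sum_eq_single (fun i : Fin k => y (i : ℕ))]
    · rw [sball_eq_cyl y h0 h1, Set.indicator_of_mem]
      intro i; rfl
    · intro w _ hw
      rw [Set.indicator_of_notMem]
      intro hy
      exact hw (funext fun i => (hy i).symm)
    · intro h; exact absurd (Finset.mem_univ _) h
  simp_rw [key]
  rw [integral_finset_sum]
  · refine Finset.sum_congr rfl fun w _ => ?_
    rw [integral_indicator_const _ (cyl_measurable w), smul_eq_mul, mul_comm]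
    rfl
  · intro w _
    exact (integrable_const _).indicator (cyl_measurable w)


/-- for the symbolic metric, the generalized dimension of order `q > 1` of `P`
exists and equals the Rényi entropy `H_q`. -/
theorem generalized_dimension_eq_renyi_entropy
    {A : Type*} [Fintype A] [Nonempty A] [MeasurableSpace A] [MeasurableSingletonClass A]
    (P : Measure (ℕ → A)) [IsProbabilityMeasure P]
    (q : ℝ) (hq : 1 < q) (Hq : ℝ)
    (hHq : Tendsto (fun k : ℕ =>
        Real.log (∑ w : Fin k → A, (P (cyl w)).toReal ^ q) / ((1 - q) * (k : ℝ)))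
      atTop (𝓝 Hq)) :
    Tendsto (fun r : ℝ =>
        Real.log (∫ y, (P (sball y r)).toReal ^ (q - 1) ∂P) / ((q - 1) * Real.log r))
      (𝓝[>] (0 : ℝ)) (𝓝 Hq) := by
  have hq1 : (1 : ℝ) - q ≠ 0 := by linarith
  set κ : ℝ → ℕ := fun r => ⌊-Real.log r⌋₊ + 1 with hκdef
  have hlog : Tendsto (fun r : ℝ => -Real.log r) (𝓝[>] (0 : ℝ)) atTop := by
    exact (tendsto_neg_atBot_atTop).comp Real.tendsto_log_nhdsGT_zero
  have hκt : Tendsto κ (𝓝[>] (0 : ℝ)) atTop :=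
    (tendsto_add_atTop_nat 1).comp (tendsto_nat_floor_atTop.comp hlog)
  have h1 : Tendsto (fun r : ℝ =>
      Real.log (∑ w : Fin (κ r) → A, (P (cyl w)).toReal ^ q) / ((1 - q) * (κ r : ℝ)))
      (𝓝[>] (0 : ℝ)) (𝓝 Hq) := hHq.comp hκt
  have hinv : Tendsto (fun r : ℝ => (-Real.log r)⁻¹) (𝓝[>] (0 : ℝ)) (𝓝 0) :=
    hlog.inv_tendsto_atTop
  have h2 : Tendsto (fun r : ℝ => (κ r : ℝ) / (-Real.log r)) (𝓝[>] (0 : ℝ)) (𝓝 1) := by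
    have hupper : Tendsto (fun r : ℝ => 1 + (-Real.log r)⁻¹) (𝓝[>] (0 : ℝ)) (𝓝 1) := by
      have := (tendsto_const_nhds (x := (1:ℝ))).add hinv
      rwa [add_zero] at this
    refine tendsto_of_tendsto_of_tendsto_of_le_of_le' tendsto_const_nhds hupper ?_ ?_
    · filter_upwards [Ioo_mem_nhdsGT_of_mem (show (0:ℝ) ∈ Ico (0:ℝ) 1 by norm_num)] with r hr
      have hlr : 0 < -Real.log r := by have := Real.log_neg hr.1 hr.2; linarith
      rw [le_div_iff₀ hlr, one_mul]
      have : -Real.log r < (⌊-Real.log r⌋₊ : ℝ) + 1 := Nat.lt_floor_add_one _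
      simp only [hκdef]
      push_cast
      linarith
    · filter_upwards [Ioo_mem_nhdsGT_of_mem (show (0:ℝ) ∈ Ico (0:ℝ) 1 by norm_num)] with r hr
      have hlr : 0 < -Real.log r := by have := Real.log_neg hr.1 hr.2; linarith
      rw [div_le_iff₀ hlr, add_mul, one_mul, inv_mul_cancel₀ hlr.ne']
      have : (⌊-Real.log r⌋₊ : ℝ) ≤ -Real.log r := Nat.floor_le hlr.le
      simp only [hκdef]
      push_cast
      linarith
  have h3 := h1.mul h2
  rw [mul_one] at h3
  refine Filter.Tendsto.congr' ?_ h3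
  filter_upwards [Ioo_mem_nhdsGT_of_mem (show (0:ℝ) ∈ Ico (0:ℝ) 1 by norm_num)] with r hr
  have hlr : Real.log r < 0 := Real.log_neg hr.1 hr.2
  have hint : ∫ y, (P (sball y r)).toReal ^ (q - 1) ∂P
      = ∑ w : Fin (κ r) → A, (P (cyl w)).toReal ^ q := by
    rw [integral_sball P (q - 1) hr.1 hr.2]
    refine Finset.sum_congr rfl fun w _ => ?_
    rcases eq_or_ne ((P (cyl w)).toReal) 0 with h | h
    · rw [h, Real.zero_rpow (by linarith : q - 1 ≠ 0), zero_mul,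
        Real.zero_rpow (by linarith : q ≠ 0)]
    · rw [Real.rpow_sub_one h, div_mul_cancel₀ _ h]
  rw [hint]
  have hκ0 : (κ r : ℝ) ≠ 0 := by positivity
  rw [div_mul_div_comm, mul_comm (Real.log _) ((κ r : ℝ)),
    show (1 - q) * (κ r : ℝ) * (-Real.log r) = (κ r : ℝ) * ((q - 1) * Real.log r) by ring,
    mul_div_mul_left _ _ hκ0]


end Stmt8
end

section
/- Let A be a finite alphabet, σ the left shift on A^ℕ, and P a σ-invariant Borel probability measure on A^ℕ which is α-mixing with rate α(n) ≤ β e^{−κn} for some β > 0. Fix an integer q ≥ 2, suppose the Rényi entropy H_q of P exists and is strictly positive, set τ_q = (q−1)H_q, and suppose κ > τ_q. Let P_q = P^{⊗q}, define Y_i(x) = inf{j ≥ 0 : x^s_{i+j} ≠ x^1_{i+j} for some s ∈ {2,…,q}}, and assume there is C₂ > 0 with P_q(Y_0 > u) ≤ C₂ e^{−τ_q u} for all integers u ≥ 1. Fix s ∈ ℝ and set u_n = ⌊(log n + s)/τ_q⌋. Then there exists ε₂ ∈ (0,1) such that lim_{n→∞} n Σ_{j=2}^{⌊n^{ε₂}⌋}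 P_q({Y_0 > u_n} ∩ {Y_1 ≤ u_n} ∩ {Y_j > u_n}) = 0. -/
open MeasureTheory Filter Set Topology

namespace Stmt15

/-- The cylinder set of length `k` determined by a word `w`. -/
def cyl {A : Type*} {k : ℕ} (w : Fin k → A) : Set (ℕ → A) :=
  {x | ∀ i : Fin k, x (i : ℕ) = w i}

/-- The left shift. -/
def shift {A : Type*} : (ℕ → A) → (ℕ → A) := fun x n => x (n + 1)

/-- `P` is α-mixing with rate `α`. -/
def AlphaMixing {A : Type*} [MeasurableSpace A] (P : Measure (ℕ → A)) (α : ℕ → ℝ) : Prop :=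
  ∀ m n : ℕ, 1 ≤ m → 1 ≤ n → ∀ E F : Set (ℕ → A),
    MeasurableSet[MeasurableSpace.comap (fun (x : ℕ → A) (i : Fin m) => x (i : ℕ))
      MeasurableSpace.pi] E →
    MeasurableSet F →
    |(P (E ∩ shift^[m + n] ⁻¹' F)).toReal - (P E).toReal * (P F).toReal| ≤ α n

/-- `Y_i(x) = inf{j ≥ 0 : x^s_{i+j} ≠ x^1_{i+j} for some s}`, valued in `ℕ∞`. -/
noncomputable def Ymatch {A : Type*} {q : ℕ} [NeZero q] (i : ℕ) (x : Fin q → ℕ → A) : ℕ∞ :=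
  sInf ((fun m : ℕ => (m : ℕ∞)) '' {m : ℕ | ∃ s : Fin q, x s (i + m) ≠ x 0 (i + m)})

lemma ymatch_gt_iff {A : Type*} {q : ℕ} [NeZero q] (i u : ℕ) (x : Fin q → ℕ → A) :
    ((u : ℕ∞) < Ymatch i x) ↔ ∀ m : ℕ, m ≤ u → ∀ s : Fin q, x s (i + m) = x 0 (i + m) := by
  constructor
  · intro h m hm s
    by_contra hne
    have hmem : (m : ℕ∞) ∈ ((fun m : ℕ => (m : ℕ∞)) ''
        {m : ℕ | ∃ s : Fin q, x s (i + m) ≠ x 0 (i + m)}) := ⟨m, ⟨s, hne⟩, rfl⟩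
    have h2 : Ymatch i x ≤ (m : ℕ∞) := sInf_le hmem
    have : (u : ℕ∞) < (m : ℕ∞) := lt_of_lt_of_le h h2
    exact absurd (Nat.cast_le.mpr hm) (not_le.mpr this)
  · intro h
    have h1 : (u : ℕ∞) + 1 ≤ Ymatch i x := by
      apply le_sInf
      rintro _ ⟨m, hm, rfl⟩
      rcases hm with ⟨s, hne⟩
      have hmu : u < m := by
        by_contra hc
        exact hne (h m (not_lt.mp hc) s)
      exact (ENat.add_one_le_iff (by simp)).mpr (Nat.cast_lt.mpr hmu)
    calc (u : ℕ∞) < (u : ℕ∞) + 1 := by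
            exact lt_of_lt_of_le (Nat.cast_lt.mpr (Nat.lt_succ_self u)) (by push_cast; rfl)
      _ ≤ Ymatch i x := h1

lemma shift_iterate_apply {A : Type*} (j : ℕ) (y : ℕ → A) (n : ℕ) :
    (shift^[j] y) n = y (n + j) := by
  induction j generalizing y n with
  | zero => rfl
  | succ j ih =>
    rw [Function.iterate_succ, Function.comp_apply, ih]
    simp [shift, Nat.add_assoc, Nat.add_comm 1 j]

lemma measurable_cyl {A : Type*} [MeasurableSpace A] [MeasurableSingletonClass A]
    {k : ℕ} (w : Fin k → A) : MeasurableSet (cyl w) := by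
  have : cyl w = ⋂ i : Fin k, (fun x : ℕ → A => x (i : ℕ)) ⁻¹' {w i} := by
    ext x; simp [cyl]
  rw [this]
  exact MeasurableSet.iInter fun i =>
    (measurable_pi_apply _) (measurableSet_singleton (w i))

lemma measurable_shift {A : Type*} [MeasurableSpace A] :
    Measurable (shift : (ℕ → A) → (ℕ → A)) :=
  measurable_pi_lambda _ fun n => measurable_pi_apply (n + 1)

lemma cyl_comap {A : Type*} [MeasurableSpace A] [MeasurableSingletonClass A]
    {k : ℕ} (w : Fin k → A) :
    MeasurableSet[MeasurableSpace.comap (fun (x : ℕ → A) (i : Fin k) => x (i : ℕ))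
      MeasurableSpace.pi] (cyl w) := by
  refine ⟨{w}, measurableSet_singleton w, ?_⟩
  ext x
  simp [cyl, funext_iff, eq_comm]

lemma pow_sub_pow_le' {x y : ℝ} (n : ℕ) (hy : 0 ≤ y) (hyx : y ≤ x) :
    x ^ n - y ^ n ≤ n * x ^ (n - 1) * (x - y) := by
  induction n with
  | zero => simp
  | succ n ih =>
    have hx : 0 ≤ x := le_trans hy hyx
    have h1 : x ^ (n + 1) - y ^ (n + 1) = x * (x ^ n - y ^ n) + (x - y) * y ^ n := by ring
    have h2 : x * (x ^ n - y ^ n) ≤ x * (n * x ^ (n - 1) * (x - y)) :=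
      mul_le_mul_of_nonneg_left ih hx
    have h3 : x * (n * x ^ (n - 1) * (x - y)) ≤ n * x ^ n * (x - y) := by
      rcases Nat.eq_zero_or_pos n with hn | hn
      · subst hn; simp
      · have : x * x ^ (n - 1) = x ^ n := by
          rw [← pow_succ']
          congr 1
          omega
        refine le_of_eq ?_
        rw [← this]; ring
    have h4 : (x - y) * y ^ n ≤ (x - y) * x ^ n :=
      mul_le_mul_of_nonneg_left (pow_le_pow_left₀ hy hyx n) (by linarith)
    have : x ^ (n+1) - y ^ (n+1) ≤ n * x ^ n * (x - y) + (x - y) * x ^ n := by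
      rw [h1]; exact add_le_add (le_trans h2 h3) h4
    calc x ^ (n+1) - y ^ (n+1) ≤ n * x ^ n * (x - y) + (x - y) * x ^ n := this
      _ = (↑(n+1)) * x ^ ((n+1) - 1) * (x - y) := by push_cast; ring

lemma ymatch_le_iff {A : Type*} {q : ℕ} [NeZero q] (i u : ℕ) (x : Fin q → ℕ → A) :
    (Ymatch i x ≤ (u : ℕ∞)) ↔ ∃ m : ℕ, m ≤ u ∧ ∃ s : Fin q, x s (i + m) ≠ x 0 (i + m) := by
  rw [← not_lt, ymatch_gt_iff]
  push_neg
  rfl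

lemma empty_event {A : Type*} {q : ℕ} [NeZero q] (u j : ℕ) (hj2 : 2 ≤ j) (hju : j ≤ u + 1) :
    {x : Fin q → ℕ → A | (u : ℕ∞) < Ymatch 0 x ∧ Ymatch 1 x ≤ (u : ℕ∞) ∧
      (u : ℕ∞) < Ymatch j x} = ∅ := by
  ext x
  simp only [mem_setOf_eq, mem_empty_iff_false, iff_false]
  rintro ⟨h0, h1, hj⟩
  rw [ymatch_gt_iff] at h0 hj
  rw [ymatch_le_iff] at h1
  obtain ⟨m, hm, s, hne⟩ := h1
  -- if 1 + m ≤ u then contradiction with h0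
  have hmu : m = u := by
    by_contra hc
    have : 1 + m ≤ u := by omega
    exact hne (by simpa using h0 (1 + m) this s)
  rw [hmu] at hne
  have := hj (u + 1 - j) (by omega) s
  have heq : j + (u + 1 - j) = 1 + u := by omega
  rw [heq] at this
  exact hne this

lemma event_subset_union {A : Type*} [Fintype A] {q : ℕ} [NeZero q]
    (u u' j : ℕ) (hu' : u' ≤ u) :
    {x : Fin q → ℕ → A | (u : ℕ∞) < Ymatch 0 x ∧ Ymatch 1 x ≤ (u : ℕ∞) ∧
        (u : ℕ∞) < Ymatch j x} ⊆
      ⋃ w : Fin (u' + 1) → A, ⋃ v : Fin (u + 1) → A,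
        Set.univ.pi (fun _ : Fin q => cyl w ∩ shift^[j] ⁻¹' cyl v) := by
  rintro x ⟨h0, -, hj⟩
  rw [ymatch_gt_iff] at h0 hj
  refine mem_iUnion.mpr ⟨fun i => x 0 (i : ℕ), mem_iUnion.mpr ⟨fun i => x 0 (j + (i : ℕ)), ?_⟩⟩
  intro s _
  constructor
  · intro i
    have := h0 (i : ℕ) (le_trans (Nat.le_of_lt_succ i.2) hu') s
    simpa using this
  · intro i
    rw [shift_iterate_apply]
    have := hj (i : ℕ) (Nat.le_of_lt_succ i.2) s
    rw [Nat.add_comm (i : ℕ) j]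
    exact this

lemma rect_subset_event {A : Type*} {q : ℕ} [NeZero q] (u : ℕ) (w : Fin (u + 1) → A) :
    Set.univ.pi (fun _ : Fin q => cyl w) ⊆
      {x : Fin q → ℕ → A | (u : ℕ∞) < Ymatch 0 x} := by
  intro x hx
  rw [mem_setOf_eq, ymatch_gt_iff]
  intro m hm s
  have hs := hx s (mem_univ s) ⟨m, by omega⟩
  have h0 := hx 0 (mem_univ 0) ⟨m, by omega⟩
  simp only [cyl, mem_setOf_eq] at hs h0
  simpa using hs.trans h0.symm

section Measures

variable {A : Type*} [Fintype A] [MeasurableSpace A] [MeasurableSingletonClass A]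
  (P : Measure (ℕ → A)) [IsProbabilityMeasure P] {q : ℕ} [NeZero q]

lemma pi_rect_measure (S : Set (ℕ → A)) :
    (Measure.pi fun _ : Fin q => P) (Set.univ.pi fun _ : Fin q => S) = (P S) ^ q := by
  rw [Measure.pi_pi]
  simp [Finset.prod_const]

lemma sum_pow_le_event (u : ℕ) :
    ∑ w : Fin (u + 1) → A, (P (cyl w)).toReal ^ q ≤
      ((Measure.pi fun _ : Fin q => P) {x : Fin q → ℕ → A | (u : ℕ∞) < Ymatch 0 x}).toReal := by
  set μ := Measure.pi fun _ : Fin q => P with hμ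
  haveI : IsProbabilityMeasure μ := by rw [hμ]; infer_instance
  have hdisj : ((Finset.univ : Finset (Fin (u+1) → A)) : Set (Fin (u+1) → A)).PairwiseDisjoint
      (fun w => Set.univ.pi fun _ : Fin q => cyl w) := by
    intro w _ w' _ hne
    apply Set.disjoint_left.mpr
    intro x hx hx'
    exact hne (funext fun i => ((hx 0 (mem_univ _)) i).symm.trans ((hx' 0 (mem_univ _)) i))
  have hmeas : ∀ w ∈ (Finset.univ : Finset (Fin (u+1) → A)),
      MeasurableSet (Set.univ.pi fun _ : Fin q => cyl w) :=
    fun w _ => MeasurableSet.univ_pi fun _ => measurable_cyl w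
  have h1 : ∑ w : Fin (u+1) → A, μ (Set.univ.pi fun _ : Fin q => cyl w) ≤
      μ {x : Fin q → ℕ → A | (u : ℕ∞) < Ymatch 0 x} := by
    rw [← measure_biUnion_finset hdisj hmeas]
    apply measure_mono
    exact iUnion₂_subset fun w _ => rect_subset_event u w
  calc ∑ w : Fin (u+1) → A, (P (cyl w)).toReal ^ q
      = ∑ w : Fin (u+1) → A, (μ (Set.univ.pi fun _ : Fin q => cyl w)).toReal := by
        refine Finset.sum_congr rfl fun w _ => ?_
        rw [hμ, pi_rect_measure, ENNReal.toReal_pow]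
    _ = (∑ w : Fin (u+1) → A, μ (Set.univ.pi fun _ : Fin q => cyl w)).toReal := by
        rw [ENNReal.toReal_sum fun w _ => measure_ne_top μ _]
    _ ≤ (μ {x : Fin q → ℕ → A | (u : ℕ∞) < Ymatch 0 x}).toReal := by
        apply ENNReal.toReal_mono (measure_ne_top μ _) h1

lemma sum_inter_le_one (u u' j : ℕ) :
    ∑ w : Fin (u' + 1) → A, ∑ v : Fin (u + 1) → A,
      (P (cyl w ∩ shift^[j] ⁻¹' cyl v)).toReal ≤ 1 := by
  have hdisj : ((Finset.univ : Finset ((Fin (u'+1) → A) × (Fin (u+1) → A))) :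
        Set ((Fin (u'+1) → A) × (Fin (u+1) → A))).PairwiseDisjoint
      (fun p => cyl p.1 ∩ shift^[j] ⁻¹' cyl p.2) := by
    intro p _ p' _ hne
    apply Set.disjoint_left.mpr
    intro x hx hx'
    apply hne
    have h1 : p.1 = p'.1 := funext fun i => (hx.1 i).symm.trans (hx'.1 i)
    have h2 : p.2 = p'.2 := funext fun i => (hx.2 i).symm.trans (hx'.2 i)
    exact Prod.ext h1 h2
  have hmeas : ∀ p ∈ (Finset.univ : Finset ((Fin (u'+1) → A) × (Fin (u+1) → A))),
      MeasurableSet (cyl p.1 ∩ shift^[j] ⁻¹' cyl p.2) :=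
    fun p _ => (measurable_cyl p.1).inter ((measurable_shift.iterate j) (measurable_cyl p.2))
  have h1 : ∑ p : (Fin (u'+1) → A) × (Fin (u+1) → A),
      P (cyl p.1 ∩ shift^[j] ⁻¹' cyl p.2) ≤ 1 := by
    rw [← measure_biUnion_finset hdisj hmeas]
    exact prob_le_one
  calc ∑ w : Fin (u' + 1) → A, ∑ v : Fin (u + 1) → A,
        (P (cyl w ∩ shift^[j] ⁻¹' cyl v)).toReal
      = ∑ p : (Fin (u'+1) → A) × (Fin (u+1) → A),
          (P (cyl p.1 ∩ shift^[j] ⁻¹' cyl p.2)).toReal := by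
        rw [← Finset.univ_product_univ, Finset.sum_product]
    _ = (∑ p : (Fin (u'+1) → A) × (Fin (u+1) → A),
          P (cyl p.1 ∩ shift^[j] ⁻¹' cyl p.2)).toReal := by
        rw [ENNReal.toReal_sum fun p _ => measure_ne_top P _]
    _ ≤ 1 := by
        have := ENNReal.toReal_mono (by simp) h1
        simpa using this

lemma event_measure_le_sum (u u' j : ℕ) (hu' : u' ≤ u) :
    ((Measure.pi fun _ : Fin q => P) {x : Fin q → ℕ → A | (u : ℕ∞) < Ymatch 0 x ∧
        Ymatch 1 x ≤ (u : ℕ∞) ∧ (u : ℕ∞) < Ymatch j x}).toReal ≤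
      ∑ w : Fin (u' + 1) → A, ∑ v : Fin (u + 1) → A,
        (P (cyl w ∩ shift^[j] ⁻¹' cyl v)).toReal ^ q := by
  set μ := Measure.pi fun _ : Fin q => P with hμ
  have h1 : μ {x : Fin q → ℕ → A | (u : ℕ∞) < Ymatch 0 x ∧
      Ymatch 1 x ≤ (u : ℕ∞) ∧ (u : ℕ∞) < Ymatch j x} ≤
      ∑ w : Fin (u' + 1) → A, ∑ v : Fin (u + 1) → A,
        P (cyl w ∩ shift^[j] ⁻¹' cyl v) ^ q := by
    calc μ _ ≤ μ (⋃ w : Fin (u' + 1) → A, ⋃ v : Fin (u + 1) → A,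
          Set.univ.pi (fun _ : Fin q => cyl w ∩ shift^[j] ⁻¹' cyl v)) :=
            measure_mono (event_subset_union u u' j hu')
      _ ≤ ∑' w : Fin (u' + 1) → A, μ (⋃ v : Fin (u + 1) → A,
          Set.univ.pi (fun _ : Fin q => cyl w ∩ shift^[j] ⁻¹' cyl v)) := measure_iUnion_le _
      _ ≤ ∑' w : Fin (u' + 1) → A, ∑' v : Fin (u + 1) → A,
          μ (Set.univ.pi (fun _ : Fin q => cyl w ∩ shift^[j] ⁻¹' cyl v)) :=
            ENNReal.tsum_le_tsum fun w => measure_iUnion_le _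
      _ = ∑ w : Fin (u' + 1) → A, ∑ v : Fin (u + 1) → A,
          P (cyl w ∩ shift^[j] ⁻¹' cyl v) ^ q := by
            rw [tsum_fintype]
            refine Finset.sum_congr rfl fun w _ => ?_
            rw [tsum_fintype]
            exact Finset.sum_congr rfl fun v _ => pi_rect_measure P _
  have hfin : (∑ w : Fin (u' + 1) → A, ∑ v : Fin (u + 1) → A,
      P (cyl w ∩ shift^[j] ⁻¹' cyl v) ^ q) ≠ ⊤ := by
    refine (ENNReal.sum_lt_top.mpr fun w _ => (ENNReal.sum_lt_top.mpr fun v _ => ?_)).ne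
    exact ENNReal.pow_lt_top (lt_of_le_of_lt (prob_le_one) ENNReal.one_lt_top)
  refine le_trans (ENNReal.toReal_mono hfin h1) (le_of_eq ?_)
  rw [ENNReal.toReal_sum]
  · refine Finset.sum_congr rfl fun w _ => ?_
    rw [ENNReal.toReal_sum]
    · exact Finset.sum_congr rfl fun v _ => ENNReal.toReal_pow _ _
    · intro v _
      exact (ENNReal.pow_lt_top (lt_of_le_of_lt (prob_le_one) ENNReal.one_lt_top)).ne
  · intro w _
    refine (ENNReal.sum_lt_top.mpr fun v _ => ?_).ne
    exact ENNReal.pow_lt_top (lt_of_le_of_lt (prob_le_one) ENNReal.one_lt_top)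

end Measures

lemma key_bound {A : Type*} [Fintype A] [MeasurableSpace A] [MeasurableSingletonClass A]
    (P : Measure (ℕ → A)) [IsProbabilityMeasure P] {q : ℕ} [NeZero q] (hq : 2 ≤ q)
    (α : ℕ → ℝ)
    (hmix : ∀ m n : ℕ, 1 ≤ m → 1 ≤ n → ∀ E F : Set (ℕ → A),
      MeasurableSet[MeasurableSpace.comap (fun (x : ℕ → A) (i : Fin m) => x (i : ℕ))
        MeasurableSpace.pi] E →
      MeasurableSet F →
      |(P (E ∩ shift^[m + n] ⁻¹' F)).toReal - (P E).toReal * (P F).toReal| ≤ α n)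
    (β κ : ℝ) (hβ : 0 < β) (hα : ∀ n : ℕ, 1 ≤ n → α n ≤ β * Real.exp (-κ * n))
    (u u' j : ℕ) (hu'u : u' ≤ u) (hju : u + 2 ≤ j)
    (Eu' Eu : ℝ)
    (hEu' : ((Measure.pi fun _ : Fin q => P)
        {x : Fin q → ℕ → A | ((u' : ℕ) : ℕ∞) < Ymatch 0 x}).toReal ≤ Eu')
    (hEu : ((Measure.pi fun _ : Fin q => P)
        {x : Fin q → ℕ → A | ((u : ℕ) : ℕ∞) < Ymatch 0 x}).toReal ≤ Eu) :
    ((Measure.pi fun _ : Fin q => P) {x : Fin q → ℕ → A | (u : ℕ∞) < Ymatch 0 x ∧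
        Ymatch 1 x ≤ (u : ℕ∞) ∧ (u : ℕ∞) < Ymatch j x}).toReal ≤
      Eu' * Eu + q * (β * Real.exp (-κ * ((j : ℝ) - u' - 1))) := by
  set a : (Fin (u' + 1) → A) → ℝ := fun w => (P (cyl w)).toReal with ha
  set b : (Fin (u + 1) → A) → ℝ := fun v => (P (cyl v)).toReal with hb
  set c : (Fin (u' + 1) → A) → (Fin (u + 1) → A) → ℝ :=
    fun w v => (P (cyl w ∩ shift^[j] ⁻¹' cyl v)).toReal with hc
  set r : ℝ := β * Real.exp (-κ * ((j : ℝ) - u' - 1)) with hr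
  have hr0 : 0 ≤ r := le_of_lt (mul_pos hβ (Real.exp_pos _))
  -- mixing estimate
  have hmixwv : ∀ w v, c w v - a w * b v ≤ r := by
    intro w v
    have hm := hmix (u' + 1) (j - u' - 1) (by omega) (by omega) (cyl w) (cyl v)
      (cyl_comap w) (measurable_cyl v)
    have hje : (u' + 1) + (j - u' - 1) = j := by omega
    rw [hje] at hm
    have hα' := hα (j - u' - 1) (by omega)
    have hcast : ((j - u' - 1 : ℕ) : ℝ) = (j : ℝ) - u' - 1 := by
      rw [Nat.cast_sub (by omega : 1 ≤ j - u'), Nat.cast_sub (by omega : u' ≤ j)]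
      push_cast; ring
    rw [hcast] at hα'
    have := abs_le.mp hm
    linarith [this.2]
  -- per-pair inequality
  have hpair : ∀ w v, c w v ^ q ≤ (a w * b v) ^ q + q * r * c w v := by
    intro w v
    have hc0 : 0 ≤ c w v := ENNReal.toReal_nonneg
    have hc1 : c w v ≤ 1 := by
      rw [hc]
      exact ENNReal.toReal_le_of_le_ofReal zero_le_one (by simpa using prob_le_one)
    have hab0 : 0 ≤ a w * b v := mul_nonneg ENNReal.toReal_nonneg ENNReal.toReal_nonneg
    rcases le_or_gt (c w v) (a w * b v) with hle | hlt
    · have := pow_le_pow_left₀ hc0 hle q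
      nlinarith [mul_nonneg (mul_nonneg (Nat.cast_nonneg (α := ℝ) q) hr0) hc0]
    · have h1 : c w v ^ q - (a w * b v) ^ q ≤ q * c w v ^ (q - 1) * (c w v - a w * b v) :=
        pow_sub_pow_le' q hab0 hlt.le
      have h2 : c w v ^ (q - 1) ≤ c w v := by
        have := pow_le_pow_of_le_one hc0 hc1 (show 1 ≤ q - 1 by omega)
        simpa using this
      have h3 : c w v - a w * b v ≤ r := hmixwv w v
      have hcq1 : 0 ≤ c w v ^ (q - 1) := pow_nonneg hc0 _
      have h4 : (q : ℝ) * c w v ^ (q - 1) * (c w v - a w * b v) ≤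
          ((q : ℝ) * c w v ^ (q - 1)) * r :=
        mul_le_mul_of_nonneg_left h3 (mul_nonneg (Nat.cast_nonneg _) hcq1)
      have h5 : ((q : ℝ) * r) * c w v ^ (q - 1) ≤ ((q : ℝ) * r) * c w v :=
        mul_le_mul_of_nonneg_left h2 (mul_nonneg (Nat.cast_nonneg _) hr0)
      nlinarith
  calc ((Measure.pi fun _ : Fin q => P) {x : Fin q → ℕ → A | (u : ℕ∞) < Ymatch 0 x ∧
        Ymatch 1 x ≤ (u : ℕ∞) ∧ (u : ℕ∞) < Ymatch j x}).toReal
      ≤ ∑ w : Fin (u' + 1) → A, ∑ v : Fin (u + 1) → A, c w v ^ q :=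
        event_measure_le_sum P u u' j hu'u
    _ ≤ ∑ w : Fin (u' + 1) → A, ∑ v : Fin (u + 1) → A, ((a w * b v) ^ q + q * r * c w v) :=
        Finset.sum_le_sum fun w _ => Finset.sum_le_sum fun v _ => hpair w v
    _ = (∑ w : Fin (u' + 1) → A, a w ^ q) * (∑ v : Fin (u + 1) → A, b v ^ q)
        + q * r * (∑ w : Fin (u' + 1) → A, ∑ v : Fin (u + 1) → A, c w v) := by
        simp only [mul_pow, Finset.sum_add_distrib, Finset.mul_sum, Finset.sum_mul]
        rw [Finset.sum_comm]
    _ ≤ Eu' * Eu + q * r * 1 := by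
        have hsa : ∑ w : Fin (u' + 1) → A, a w ^ q ≤ Eu' :=
          le_trans (sum_pow_le_event P u') hEu'
        have hsb : ∑ v : Fin (u + 1) → A, b v ^ q ≤ Eu :=
          le_trans (sum_pow_le_event P u) hEu
        have hsa0 : 0 ≤ ∑ w : Fin (u' + 1) → A, a w ^ q :=
          Finset.sum_nonneg fun w _ => pow_nonneg ENNReal.toReal_nonneg _
        have hsb0 : 0 ≤ ∑ v : Fin (u + 1) → A, b v ^ q :=
          Finset.sum_nonneg fun v _ => pow_nonneg ENNReal.toReal_nonneg _
        have hqr0 : 0 ≤ (q : ℝ) * r := mul_nonneg (Nat.cast_nonneg _) hr0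
        refine add_le_add (mul_le_mul hsa hsb hsb0 (le_trans hsa0 hsa)) ?_
        exact mul_le_mul_of_nonneg_left (sum_inter_le_one P u u' j) hqr0
    _ = Eu' * Eu + q * (β * Real.exp (-κ * ((j : ℝ) - u' - 1))) := by
        rw [mul_one, hr]


set_option maxHeartbeats 1000000 in
/-- the Д₁'(uₙ) short-return sum vanishes under exponential α-mixing with
`κ > τ_q = (q-1)H_q`. -/
theorem short_returns_sum_vanishes
    {A : Type*} [Fintype A] [Nonempty A] [MeasurableSpace A] [MeasurableSingletonClass A]
    (P : Measure (ℕ → A)) [IsProbabilityMeasure P]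
    (hinv : P.map shift = P)
    (α : ℕ → ℝ) (hmix : AlphaMixing P α)
    (q : ℕ) [NeZero q] (hq : 2 ≤ q) (Hq : ℝ) (hHq_pos : 0 < Hq)
    (hHq : Tendsto (fun k : ℕ =>
        Real.log (∑ w : Fin k → A, (P (cyl w)).toReal ^ q) / ((1 - (q : ℝ)) * (k : ℝ)))
      atTop (𝓝 Hq))
    (β κ : ℝ) (hβ : 0 < β) (hκ : ((q : ℝ) - 1) * Hq < κ)
    (hα : ∀ n : ℕ, 1 ≤ n → α n ≤ β * Real.exp (-κ * n))
    (C₂ : ℝ) (hC₂ : 0 < C₂)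
    (hC₂bound : ∀ u : ℕ, 1 ≤ u →
      ((Measure.pi fun _ : Fin q => P)
          {x : Fin q → ℕ → A | ((u : ℕ) : ℕ∞) < Ymatch 0 x}).toReal
        ≤ C₂ * Real.exp (-(((q : ℝ) - 1) * Hq) * u))
    (s : ℝ) :
    ∃ ε₂ : ℝ, 0 < ε₂ ∧ ε₂ < 1 ∧
      Tendsto (fun n : ℕ => (n : ℝ) *
          ∑ j ∈ Finset.Icc 2 ⌊(n : ℝ) ^ ε₂⌋₊,
            ((Measure.pi fun _ : Fin q => P)
              {x : Fin q → ℕ → A |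
                ((⌊(Real.log n + s) / (((q : ℝ) - 1) * Hq)⌋₊ : ℕ) : ℕ∞) < Ymatch 0 x ∧
                Ymatch 1 x ≤ ((⌊(Real.log n + s) / (((q : ℝ) - 1) * Hq)⌋₊ : ℕ) : ℕ∞) ∧
                ((⌊(Real.log n + s) / (((q : ℝ) - 1) * Hq)⌋₊ : ℕ) : ℕ∞) < Ymatch j x}).toReal)
        atTop (𝓝 0) := by
  have hmix' : ∀ m n : ℕ, 1 ≤ m → 1 ≤ n → ∀ E F : Set (ℕ → A),
      MeasurableSet[MeasurableSpace.comap (fun (x : ℕ → A) (i : Fin m) => x (i : ℕ))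
        MeasurableSpace.pi] E →
      MeasurableSet F →
      |(P (E ∩ shift^[m + n] ⁻¹' F)).toReal - (P E).toReal * (P F).toReal| ≤ α n := hmix
  clear hmix
  set τ : ℝ := ((q : ℝ) - 1) * Hq with hτdef
  have hq2 : (2 : ℝ) ≤ (q : ℝ) := by exact_mod_cast hq
  have hτ : 0 < τ := mul_pos (by linarith) hHq_pos
  have hκpos : 0 < κ := lt_trans hτ hκ
  have hκτ : τ < κ := hκ
  set δ : ℝ := (κ - τ) / (2 * κ) with hδdef
  set ε₂ : ℝ := δ / 2 with hε₂def
  have hδpos : 0 < δ := div_pos (by linarith) (by linarith)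
  have hδlt1 : δ < 1 := by
    rw [hδdef, div_lt_one (by linarith)]; linarith
  have hε₂pos : 0 < ε₂ := by rw [hε₂def]; linarith
  have hε₂lt1 : ε₂ < 1 := by rw [hε₂def]; linarith
  have hε₂ltδ : ε₂ < δ := by rw [hε₂def]; linarith
  set k : ℝ := κ * (1 - δ) / τ with hkdef
  have hkval : k = (κ + τ) / (2 * τ) := by
    rw [hkdef, hδdef]; field_simp; ring
  have hεval : ε₂ = (κ - τ) / (4 * κ) := by
    rw [hε₂def, hδdef]; ring
  have he₂neg : 1 + ε₂ - k < 0 := by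
    have hiden : (κ + τ) / (2 * τ) - 1 - (κ - τ) / (4 * κ) =
        ((2 * κ - τ) * (κ - τ)) / (4 * κ * τ) := by
      field_simp; ring
    have hpos : 0 < ((2 * κ - τ) * (κ - τ)) / (4 * κ * τ) :=
      div_pos (mul_pos (by linarith) (by linarith)) (by positivity)
    rw [hkval, hεval]; linarith
  set e₁ : ℝ := ε₂ - δ with he₁def
  set e₂ : ℝ := 1 + ε₂ - k with he₂def
  set c₁ : ℝ := -δ * (s - τ) + 2 * τ - s with hc₁def
  set c₂ : ℝ := -k * (s - τ) - κ with hc₂def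
  have he₁neg : e₁ < 0 := by rw [he₁def]; linarith
  refine ⟨ε₂, hε₂pos, hε₂lt1, ?_⟩
  -- the dominating sequence
  have hlog : Tendsto (fun n : ℕ => Real.log n) atTop atTop :=
    Real.tendsto_log_atTop.comp tendsto_natCast_atTop_atTop
  have hD : Tendsto (fun n : ℕ => C₂ ^ 2 * Real.exp (e₁ * Real.log n + c₁)
      + (q : ℝ) * β * Real.exp (e₂ * Real.log n + c₂)) atTop (𝓝 0) := by
    have t1 : Tendsto (fun n : ℕ => e₁ * Real.log n + c₁) atTop atBot :=
      tendsto_atBot_add_const_right _ c₁ (hlog.const_mul_atTop_of_neg he₁neg)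
    have t2 : Tendsto (fun n : ℕ => e₂ * Real.log n + c₂) atTop atBot :=
      tendsto_atBot_add_const_right _ c₂ (hlog.const_mul_atTop_of_neg he₂neg)
    have e1 : Tendsto (fun n : ℕ => C₂ ^ 2 * Real.exp (e₁ * Real.log n + c₁)) atTop (𝓝 0) := by
      have := (Real.tendsto_exp_atBot.comp t1).const_mul (C₂ ^ 2)
      simpa using this
    have e2 : Tendsto (fun n : ℕ => (q : ℝ) * β * Real.exp (e₂ * Real.log n + c₂))
        atTop (𝓝 0) := by
      have := (Real.tendsto_exp_atBot.comp t2).const_mul ((q : ℝ) * β)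
      simpa using this
    simpa using e1.add e2
  -- the auxiliary indices
  set u : ℕ → ℕ := fun n => ⌊(Real.log n + s) / τ⌋₊ with hudef
  set u' : ℕ → ℕ := fun n => ⌊δ * (u n : ℝ)⌋₊ with hu'def
  have hu_top : Tendsto u atTop atTop := by
    apply tendsto_nat_floor_atTop.comp
    exact (tendsto_atTop_add_const_right _ s hlog).atTop_div_const hτ
  have hu'_top : Tendsto u' atTop atTop := by
    apply tendsto_nat_floor_atTop.comp
    exact (tendsto_natCast_atTop_atTop.comp hu_top).const_mul_atTop hδpos
  apply squeeze_zero' ?_ ?_ hD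
  · filter_upwards with n
    exact mul_nonneg (Nat.cast_nonneg _)
      (Finset.sum_nonneg fun j _ => ENNReal.toReal_nonneg)
  · filter_upwards [eventually_ge_atTop 1, hu'_top.eventually_ge_atTop 1] with n hn1 hu'1n
    set un : ℕ := ⌊(Real.log (n : ℝ) + s) / τ⌋₊ with hundef
    have hu'1n : 1 ≤ ⌊δ * (un : ℝ)⌋₊ := hu'1n
    set u'n : ℕ := ⌊δ * (un : ℝ)⌋₊ with hu'ndef
    set L : ℝ := Real.log n with hLdef
    have hnR : (0 : ℝ) < n := by exact_mod_cast hn1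
    have hu'u : u'n ≤ un := by
      have : δ * (un : ℝ) ≤ ((un : ℕ) : ℝ) := by nlinarith [Nat.cast_nonneg (α := ℝ) (un)]
      simpa [hu'def] using Nat.floor_mono this
    have hu1 : 1 ≤ un := le_trans hu'1n hu'u
    set N : ℕ := ⌊(n : ℝ) ^ ε₂⌋₊ with hNdef
    set B : ℝ := (C₂ * Real.exp (-τ * u'n)) * (C₂ * Real.exp (-τ * un))
      + (q : ℝ) * (β * Real.exp (-κ * ((un : ℝ) - (u'n : ℝ) + 1))) with hBdef
    have hB0 : 0 ≤ B := by positivity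
    have hterm : ∀ j ∈ Finset.Icc 2 N,
        ((Measure.pi fun _ : Fin q => P)
          {x : Fin q → ℕ → A | ((un : ℕ) : ℕ∞) < Ymatch 0 x ∧
            Ymatch 1 x ≤ ((un : ℕ) : ℕ∞) ∧ ((un : ℕ) : ℕ∞) < Ymatch j x}).toReal ≤ B := by
      intro j hj
      obtain ⟨hj2, hjN⟩ := Finset.mem_Icc.mp hj
      rcases le_or_gt j (un + 1) with hsmall | hbig
      · rw [empty_event (un) j hj2 hsmall]
        simpa using hB0
      · have hju : un + 2 ≤ j := by omega
        calc ((Measure.pi fun _ : Fin q => P)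
              {x : Fin q → ℕ → A | ((un : ℕ) : ℕ∞) < Ymatch 0 x ∧
                Ymatch 1 x ≤ ((un : ℕ) : ℕ∞) ∧ ((un : ℕ) : ℕ∞) < Ymatch j x}).toReal
            ≤ (C₂ * Real.exp (-τ * u'n)) * (C₂ * Real.exp (-τ * un))
              + (q : ℝ) * (β * Real.exp (-κ * ((j : ℝ) - (u'n : ℝ) - 1))) :=
              key_bound P hq α hmix' β κ hβ hα (un) (u'n) j hu'u hju
                (C₂ * Real.exp (-τ * u'n)) (C₂ * Real.exp (-τ * un))
                (hC₂bound (u'n) hu'1n) (hC₂bound (un) hu1)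
          _ ≤ B := by
              rw [hBdef]
              have hcast : ((un : ℝ) + 2) ≤ (j : ℝ) := by exact_mod_cast hju
              have h7 : (un : ℝ) - (u'n : ℝ) + 1 ≤ (j : ℝ) - (u'n : ℝ) - 1 := by linarith
              have h8 := mul_le_mul_of_nonneg_left h7 hκpos.le
              have hexp : Real.exp (-κ * ((j : ℝ) - (u'n : ℝ) - 1)) ≤
                  Real.exp (-κ * ((un : ℝ) - (u'n : ℝ) + 1)) :=
                Real.exp_le_exp.mpr (by linarith)
              have hq0 : (0 : ℝ) ≤ (q : ℝ) := Nat.cast_nonneg q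
              exact add_le_add_right (mul_le_mul_of_nonneg_left
                (mul_le_mul_of_nonneg_left hexp hβ.le) hq0) _
    have hsum_le : ∑ j ∈ Finset.Icc 2 N,
        ((Measure.pi fun _ : Fin q => P)
          {x : Fin q → ℕ → A | ((un : ℕ) : ℕ∞) < Ymatch 0 x ∧
            Ymatch 1 x ≤ ((un : ℕ) : ℕ∞) ∧ ((un : ℕ) : ℕ∞) < Ymatch j x}).toReal
          ≤ (n : ℝ) ^ ε₂ * B := by
      have h1 := Finset.sum_le_card_nsmul (Finset.Icc 2 N) _ B hterm
      rw [nsmul_eq_mul] at h1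
      refine le_trans h1 (mul_le_mul_of_nonneg_right ?_ hB0)
      calc ((Finset.Icc 2 N).card : ℝ) ≤ (N : ℝ) := by
            rw [Nat.card_Icc]; exact_mod_cast (by omega : N + 1 - 2 ≤ N)
        _ ≤ (n : ℝ) ^ ε₂ := Nat.floor_le (Real.rpow_nonneg (Nat.cast_nonneg n) ε₂)
    -- now the exponent comparison
    have hτu : L + s - τ ≤ τ * un := by
      have h1 : (L + s) / τ - 1 < (un : ℝ) := Nat.sub_one_lt_floor _
      have hdiv : τ * ((L + s) / τ) = L + s := by field_simp
      nlinarith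
    have hτu' : δ * (L + s - τ) - τ ≤ τ * u'n := by
      have h1 : δ * (un : ℝ) - 1 < (u'n : ℝ) := Nat.sub_one_lt_floor _
      nlinarith
    have huu' : κ * ((un : ℝ) - (u'n : ℝ) + 1) ≥ k * (L + s - τ) + κ := by
      have h3 : (u'n : ℝ) ≤ δ * un := Nat.floor_le (by positivity)
      have h4 : (L + s - τ) / τ ≤ (un : ℝ) := by
        rw [div_le_iff₀ hτ]; nlinarith
      have h5 : (1 - δ) * ((L + s - τ) / τ) ≤ (un : ℝ) - (u'n : ℝ) := by nlinarith
      have h6 : k * (L + s - τ) = κ * ((1 - δ) * ((L + s - τ) / τ)) := by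
        rw [hkdef]; field_simp
      nlinarith
    have hn_eq : (n : ℝ) = Real.exp L := (Real.exp_log hnR).symm
    have hr_eq : (n : ℝ) ^ ε₂ = Real.exp (L * ε₂) := by
      rw [Real.rpow_def_of_pos hnR]
    have key1 : (n : ℝ) * ((n : ℝ) ^ ε₂ *
        ((C₂ * Real.exp (-τ * u'n)) * (C₂ * Real.exp (-τ * un)))) ≤
        C₂ ^ 2 * Real.exp (e₁ * L + c₁) := by
      rw [hr_eq, hn_eq]
      rw [show Real.exp L * (Real.exp (L * ε₂) *
          ((C₂ * Real.exp (-τ * (u'n : ℝ))) * (C₂ * Real.exp (-τ * (un : ℝ))))) =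
          C₂ ^ 2 * Real.exp (L + L * ε₂ + -(τ * (u'n : ℝ)) + -(τ * (un : ℝ))) from by
        rw [Real.exp_add, Real.exp_add, Real.exp_add]; ring]
      refine mul_le_mul_of_nonneg_left (Real.exp_le_exp.mpr ?_) (sq_nonneg C₂)
      rw [he₁def, hc₁def]
      linarith
    have key2 : (n : ℝ) * ((n : ℝ) ^ ε₂ *
        ((q : ℝ) * (β * Real.exp (-κ * ((un : ℝ) - (u'n : ℝ) + 1))))) ≤
        (q : ℝ) * β * Real.exp (e₂ * L + c₂) := by
      rw [hr_eq, hn_eq]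
      rw [show Real.exp L * (Real.exp (L * ε₂) *
          ((q : ℝ) * (β * Real.exp (-κ * ((un : ℝ) - (u'n : ℝ) + 1))))) =
          (q : ℝ) * β * Real.exp (L + L * ε₂ + -κ * ((un : ℝ) - (u'n : ℝ) + 1)) from by
        rw [Real.exp_add, Real.exp_add]; ring]
      refine mul_le_mul_of_nonneg_left (Real.exp_le_exp.mpr ?_)
        (mul_nonneg (Nat.cast_nonneg q) hβ.le)
      rw [he₂def, hc₂def]
      linarith
    calc (n : ℝ) * ∑ j ∈ Finset.Icc 2 N,
          ((Measure.pi fun _ : Fin q => P)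
            {x : Fin q → ℕ → A | ((un : ℕ) : ℕ∞) < Ymatch 0 x ∧
              Ymatch 1 x ≤ ((un : ℕ) : ℕ∞) ∧ ((un : ℕ) : ℕ∞) < Ymatch j x}).toReal
        ≤ (n : ℝ) * ((n : ℝ) ^ ε₂ * B) :=
          mul_le_mul_of_nonneg_left hsum_le (Nat.cast_nonneg n)
      _ = (n : ℝ) * ((n : ℝ) ^ ε₂ *
            ((C₂ * Real.exp (-τ * u'n)) * (C₂ * Real.exp (-τ * un))))
          + (n : ℝ) * ((n : ℝ) ^ ε₂ *
            ((q : ℝ) * (β * Real.exp (-κ * ((un : ℝ) - (u'n : ℝ) + 1))))) := by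
          rw [hBdef]; ring
      _ ≤ C₂ ^ 2 * Real.exp (e₁ * L + c₁) + (q : ℝ) * β * Real.exp (e₂ * L + c₂) :=
          add_le_add key1 key2
      _ = C₂ ^ 2 * Real.exp (e₁ * Real.log n + c₁)
          + (q : ℝ) * β * Real.exp (e₂ * Real.log n + c₂) := by rw [hLdef]

end Stmt15
end

section
/- Let A be a finite alphabet, σ the left shift on A^ℕ, and P a σ-invariant Borel probability measure on A^ℕ which is α-mixing with rate α(n) ≤ β e^{−κn} for some β, κ > 0. Fix an integer q ≥ 2, suppose the Rényi entropy H_q of P exists and is strictly positive, set τ_q = (q−1)H_q, let P_q = P^{⊗q}, define Y_i(x) = inf{j ≥ 0 : x^s_{i+j} ≠ x^1_{i+j} for some s ∈ {2,…,q}}, and assume there is C₂ > 0 with P_q(Y_0 > u) ≤ C₂ e^{−τ_q u} for all integers u ≥ 1. Fix s ∈ ℝ, set u_n = ⌊(log n + s)/τ_q⌋, and define the events A_n = {Y_0 > u_n} ∩ {Y_1 ≤ u_n} and, for integers t, l ≥ 1, B_{t,l,n} = ⋂_{i=t}^{t+l−1} {x : (Y_i(x) > u_n and Y_{i+1}(x)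 ≤ u_n) fails}. Then there exists a constant C₅ > 0 such that for all n, t, l ≥ 1, |P_q(A_n ∩ B_{t,l,n}) − P_q(A_n) P_q(B_{0,l,n})| ≤ qβ e^{−κ(t/2 − 1)} + C₅ e^{−(t/2 − 1)τ_q}. -/
open MeasureTheory Filter Set Topology

namespace Stmt16

/-- The cylinder set of length `k` determined by a word `w`. -/
def cyl {A : Type*} {k : ℕ} (w : Fin k → A) : Set (ℕ → A) :=
  {x | ∀ i : Fin k, x (i : ℕ) = w i}

/-- The left shift. -/
def shift {A : Type*} : (ℕ → A) → (ℕ → A) := fun x n => x (n + 1)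

/-- `P` is α-mixing with rate `α`. -/
def AlphaMixing {A : Type*} [MeasurableSpace A] (P : Measure (ℕ → A)) (α : ℕ → ℝ) : Prop :=
  ∀ m n : ℕ, 1 ≤ m → 1 ≤ n → ∀ E F : Set (ℕ → A),
    MeasurableSet[MeasurableSpace.comap (fun (x : ℕ → A) (i : Fin m) => x (i : ℕ))
      MeasurableSpace.pi] E →
    MeasurableSet F →
    |(P (E ∩ shift^[m + n] ⁻¹' F)).toReal - (P E).toReal * (P F).toReal| ≤ α n

/-- `Y_i(x) = inf{j ≥ 0 : x^s_{i+j} ≠ x^1_{i+j} for some s}`, valued in `ℕ∞`. -/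
noncomputable def Ymatch {A : Type*} {q : ℕ} [NeZero q] (i : ℕ) (x : Fin q → ℕ → A) : ℕ∞ :=
  sInf ((fun m : ℕ => (m : ℕ∞)) '' {m : ℕ | ∃ s : Fin q, x s (i + m) ≠ x 0 (i + m)})

/-- The event `A = {Y_0 > u} ∩ {Y_1 ≤ u}`. -/
noncomputable def Aev {A : Type*} (q : ℕ) [NeZero q] (u : ℕ) : Set (Fin q → ℕ → A) :=
  {x | (u : ℕ∞) < Ymatch 0 x ∧ Ymatch 1 x ≤ (u : ℕ∞)}

/-- The event `B_{t,l} = ⋂_{i=t}^{t+l-1} {(Y_i > u and Y_{i+1} ≤ u) fails}`. -/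
noncomputable def Bev {A : Type*} (q : ℕ) [NeZero q] (u t l : ℕ) : Set (Fin q → ℕ → A) :=
  ⋂ i ∈ Finset.Ico t (t + l),
    {x | ¬((u : ℕ∞) < Ymatch i x ∧ Ymatch (i + 1) x ≤ (u : ℕ∞))}

set_option linter.unusedSectionVars false
set_option maxHeartbeats 1000000

section Aux

variable {A : Type*} [Fintype A] [Nonempty A] [MeasurableSpace A] [MeasurableSingletonClass A]

lemma shift_measurable : Measurable (shift : (ℕ → A) → (ℕ → A)) :=
  measurable_pi_lambda _ fun n => measurable_pi_apply (n + 1)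

lemma shift_iterate_apply (r : ℕ) (x : ℕ → A) (j : ℕ) : (shift^[r]) x j = x (j + r) := by
  induction r generalizing x j with
  | zero => simp
  | succ r ih =>
      rw [Function.iterate_succ_apply, ih]
      rfl

lemma Ymatch_gt_iff {q : ℕ} [NeZero q] {i u : ℕ} {x : Fin q → ℕ → A} :
    (u : ℕ∞) < Ymatch i x ↔ ∀ m ≤ u, ∀ s : Fin q, x s (i + m) = x 0 (i + m) := by
  constructor
  · intro h m hm s
    by_contra hne
    have hmem : ((m : ℕ∞)) ∈ (fun m : ℕ => (m : ℕ∞)) ''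
        {m : ℕ | ∃ s : Fin q, x s (i + m) ≠ x 0 (i + m)} := ⟨m, ⟨s, hne⟩, rfl⟩
    have h2 : (u : ℕ∞) < (m : ℕ∞) := lt_of_lt_of_le h (sInf_le hmem)
    exact absurd (by exact_mod_cast h2) (not_lt.mpr hm)
  · intro h
    have h1 : ((u : ℕ∞) + 1) ≤ Ymatch i x := by
      apply le_sInf
      rintro a ⟨m, hm, rfl⟩
      have hum : u < m := by
        by_contra hle
        push_neg at hle
        obtain ⟨s, hs⟩ := hm
        exact hs (h m hle s)
      show (u : ℕ∞) + 1 ≤ (m : ℕ∞)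
      exact_mod_cast Nat.succ_le_of_lt hum
    calc (u : ℕ∞) < (u : ℕ∞) + 1 := by exact_mod_cast Nat.lt_succ_self u
    _ ≤ _ := h1

lemma Ymatch_le_iff {q : ℕ} [NeZero q] {i u : ℕ} {x : Fin q → ℕ → A} :
    Ymatch i x ≤ (u : ℕ∞) ↔ ∃ m ≤ u, ∃ s : Fin q, x s (i + m) ≠ x 0 (i + m) := by
  rw [← not_lt, Ymatch_gt_iff]
  push_neg
  rfl

lemma Ymatch_gt_congr {q : ℕ} [NeZero q] {u i M : ℕ} (hiu : i + u < M) {x y : Fin q → ℕ → A}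
    (hxy : ∀ s j, j < M → x s j = y s j) :
    ((u : ℕ∞) < Ymatch i x ↔ (u : ℕ∞) < Ymatch i y) := by
  rw [Ymatch_gt_iff, Ymatch_gt_iff]
  constructor <;> intro h m hm s
  · rw [← hxy s _ (by omega), ← hxy 0 _ (by omega)]; exact h m hm s
  · rw [hxy s _ (by omega), hxy 0 _ (by omega)]; exact h m hm s

lemma Aev_dep {q u : ℕ} [NeZero q] (x y : Fin q → ℕ → A)
    (hxy : ∀ s j, j < u + 2 → x s j = y s j) (hx : x ∈ Aev q u) : y ∈ Aev q u := by
  obtain ⟨h1, h2⟩ := hx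
  constructor
  · exact (Ymatch_gt_congr (by omega) hxy).mp h1
  · rw [← not_lt] at h2 ⊢
    exact fun hc => h2 ((Ymatch_gt_congr (by omega) hxy).mpr hc)

lemma mem_Bev {q : ℕ} [NeZero q] {u t l : ℕ} {x : Fin q → ℕ → A} :
    x ∈ Bev q u t l ↔ ∀ i, t ≤ i → i < t + l →
      ¬((u : ℕ∞) < Ymatch i x ∧ Ymatch (i + 1) x ≤ (u : ℕ∞)) := by
  simp only [Bev, Set.mem_iInter, Finset.mem_Ico, Set.mem_setOf_eq, and_imp]

lemma Bev_dep {q u t l : ℕ} [NeZero q] (x y : Fin q → ℕ → A)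
    (hxy : ∀ s j, j < t + l + u + 1 → x s j = y s j) (hx : x ∈ Bev q u t l) :
    y ∈ Bev q u t l := by
  rw [mem_Bev] at hx ⊢
  intro i h1 h2 hc
  refine hx i h1 h2 ⟨(Ymatch_gt_congr (by omega) hxy).mpr hc.1, ?_⟩
  rw [← not_lt] at hc ⊢
  exact fun hd => hc.2 ((Ymatch_gt_congr (by omega) hxy).mp hd)

lemma measurableSet_of_dep {q M : ℕ} [NeZero q] {S : Set (Fin q → ℕ → A)}
    (h : ∀ x y : Fin q → ℕ → A, (∀ s j, j < M → x s j = y s j) → x ∈ S → y ∈ S) :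
    MeasurableSet S := by
  classical
  set proj : (Fin q → ℕ → A) → (Fin q → Fin M → A) := fun x s j => x s (j : ℕ) with hproj
  have hm : Measurable proj :=
    measurable_pi_lambda _ fun s => measurable_pi_lambda _ fun j =>
      (measurable_pi_apply (j : ℕ)).comp (measurable_pi_apply s)
  have hS : S = proj ⁻¹' (proj '' S) := by
    apply Subset.antisymm (subset_preimage_image _ _)
    rintro x ⟨y, hy, hxy⟩
    refine h y x (fun s j hj => ?_) hy
    exact congrFun (congrFun hxy s) ⟨j, hj⟩
  rw [hS]
  exact hm MeasurableSet.of_discrete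

lemma comap_measurableSet_of_dep {M : ℕ} {S : Set (ℕ → A)}
    (h : ∀ x y : ℕ → A, (∀ j, j < M → x j = y j) → x ∈ S → y ∈ S) :
    MeasurableSet[MeasurableSpace.comap (fun (x : ℕ → A) (i : Fin M) => x (i : ℕ))
      MeasurableSpace.pi] S := by
  classical
  set proj : (ℕ → A) → (Fin M → A) := fun x i => x (i : ℕ) with hproj
  refine ⟨proj '' S, MeasurableSet.of_discrete, ?_⟩
  apply Subset.antisymm
  · rintro x ⟨y, hy, hxy⟩
    exact h y x (fun j hj => congrFun hxy ⟨j, hj⟩) hy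
  · exact subset_preimage_image _ _

lemma Ymatch_shift {q : ℕ} [NeZero q] (t i : ℕ) (x : Fin q → ℕ → A) :
    Ymatch i (fun s => shift^[t] (x s)) = Ymatch (i + t) x := by
  unfold Ymatch
  have he : ∀ m : ℕ, i + m + t = i + t + m := fun m => by omega
  congr 2
  ext m
  simp only [Set.mem_setOf_eq, shift_iterate_apply, he]

lemma Bev_shift {q u t l : ℕ} [NeZero q] :
    Bev q u t l = (fun (x : Fin q → ℕ → A) (s : Fin q) => shift^[t] (x s)) ⁻¹' Bev q u 0 l := by
  ext x
  rw [Set.mem_preimage, mem_Bev, mem_Bev]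
  constructor
  · intro hx i _ hil
    rw [Ymatch_shift, Ymatch_shift]
    have e2 : i + 1 + t = i + t + 1 := by omega
    rw [e2]
    exact hx (i + t) (by omega) (by omega)
  · intro hx i hti hil
    have h := hx (i - t) (Nat.zero_le _) (by omega)
    rw [Ymatch_shift, Ymatch_shift] at h
    have e1 : i - t + t = i := by omega
    have e2 : i - t + 1 + t = i + 1 := by omega
    rw [e1, e2] at h
    exact h

lemma shiftq_measurePreserving (P : Measure (ℕ → A)) [IsProbabilityMeasure P]
    (hinv : P.map shift = P) (q r : ℕ) [NeZero q] :
    MeasurePreserving (fun (x : Fin q → ℕ → A) (s : Fin q) => shift^[r] (x s))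
      (Measure.pi fun _ => P) (Measure.pi fun _ => P) := by
  have h1 : MeasurePreserving (shift : (ℕ → A) → (ℕ → A)) P P := ⟨shift_measurable, hinv⟩
  exact measurePreserving_pi _ _ (fun _ => h1.iterate r)

end Aux

section Mixing

variable {A : Type*} [Fintype A] [Nonempty A] [MeasurableSpace A] [MeasurableSingletonClass A]

lemma prod_mixing (P : Measure (ℕ → A)) [IsProbabilityMeasure P]
    (hinv : P.map shift = P) (α : ℕ → ℝ) (hmix : AlphaMixing P α)
    (q : ℕ) [NeZero q] (m n : ℕ) (hm : 1 ≤ m) (hn : 1 ≤ n)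
    (E F : Set (Fin q → ℕ → A))
    (hEdep : ∀ x y : Fin q → ℕ → A, (∀ s j, j < m → x s j = y s j) → x ∈ E → y ∈ E)
    (hF : MeasurableSet F) :
    |((Measure.pi fun _ : Fin q => P)
        (E ∩ (fun x s => shift^[m + n] (x s)) ⁻¹' F)).toReal
      - ((Measure.pi fun _ : Fin q => P) E).toReal *
        ((Measure.pi fun _ : Fin q => P) F).toReal| ≤ (q : ℝ) * α n := by
  classical
  set μq : Measure (Fin q → ℕ → A) := Measure.pi fun _ => P with hμq
  set ν : Measure (Fin q → (ℕ → A) × (ℕ → A)) := Measure.pi fun _ => P.prod P with hν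
  have hE : MeasurableSet E := measurableSet_of_dep hEdep
  have hshr : Measurable (shift^[m + n] : (ℕ → A) → (ℕ → A)) := shift_measurable.iterate _
  set shq : (Fin q → ℕ → A) → Fin q → ℕ → A := fun x s => shift^[m + n] (x s) with hshq
  have hshq_meas : Measurable shq :=
    measurable_pi_lambda _ fun s => hshr.comp (measurable_pi_apply s)
  have hshq_mp : MeasurePreserving shq μq μq := shiftq_measurePreserving P hinv q (m + n)
  set F' : Set (Fin q → ℕ → A) := shq ⁻¹' F with hF'
  have hF'm : MeasurableSet F' := hshq_meas hF
  set xv : (Fin q → (ℕ → A) × (ℕ → A)) → Fin q → ℕ → A := fun w s => (w s).1 with hxv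
  have hxv_meas : Measurable xv :=
    measurable_pi_lambda _ fun s => measurable_fst.comp (measurable_pi_apply s)
  set zv : ℕ → (Fin q → (ℕ → A) × (ℕ → A)) → Fin q → ℕ → A :=
    fun j w s => if (s : ℕ) < j then (w s).2 else (w s).1 with hzv
  have hzv_meas : ∀ j, Measurable (zv j) := by
    intro j
    apply measurable_pi_lambda
    intro s
    by_cases hs : (s : ℕ) < j
    · simp only [hzv, if_pos hs]; exact measurable_snd.comp (measurable_pi_apply s)
    · simp only [hzv, if_neg hs]; exact measurable_fst.comp (measurable_pi_apply s)
  set S : ℕ → Set (Fin q → (ℕ → A) × (ℕ → A)) := fun j => xv ⁻¹' E ∩ zv j ⁻¹' F' with hSdef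
  have hSm : ∀ j, MeasurableSet (S j) := fun j => (hxv_meas hE).inter ((hzv_meas j) hF'm)
  set T : ℕ → ℝ := fun j => (ν (S j)).toReal with hT
  -- Step A
  have hxvmp : MeasurePreserving xv ν μq := by
    apply measurePreserving_pi
    intro _
    exact ⟨measurable_fst, Measure.fst_prod⟩
  have hT0 : T 0 = (μq (E ∩ shq ⁻¹' F)).toReal := by
    have hz0 : zv 0 = xv := by
      funext w s; simp [hzv, hxv]
    have hS0 : S 0 = xv ⁻¹' (E ∩ F') := by
      rw [hSdef]; simp only [hz0, Set.preimage_inter]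
    simp only [hT, hS0, hxvmp.measure_preimage (hE.inter hF'm).nullMeasurableSet]
    rfl
  -- Step B
  have hTq : T q = (μq E).toReal * (μq F).toReal := by
    set e := MeasurableEquiv.arrowProdEquivProdArrow (ℕ → A) (ℕ → A) (Fin q) with he
    have hemp : MeasurePreserving e ν (μq.prod μq) :=
      measurePreserving_arrowProdEquivProdArrow (ℕ → A) (ℕ → A) (Fin q)
        (fun _ => P) (fun _ => P)
    have hzq : zv q = fun w s => (w s).2 := by
      funext w s; simp [hzv, s.isLt]
    have hSq : S q = e ⁻¹' (E ×ˢ F') := by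
      rw [hSdef]
      ext w
      simp only [Set.mem_inter_iff, Set.mem_preimage, Set.mem_prod, hzq]
      exact Iff.rfl
    rw [hT]
    simp only [hSq, hemp.measure_preimage (hE.prod hF'm).nullMeasurableSet,
      Measure.prod_prod]
    rw [hshq_mp.measure_preimage hF.nullMeasurableSet, ENNReal.toReal_mul]
  -- Step C
  have hshiftmp : MeasurePreserving (shift^[m + n] : (ℕ → A) → (ℕ → A)) P P :=
    (⟨shift_measurable, hinv⟩ : MeasurePreserving (shift : (ℕ → A) → (ℕ → A)) P P).iterate (m + n)
  have hstep : ∀ i : Fin q, |T (i : ℕ) - T ((i : ℕ) + 1)| ≤ α n := by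
    intro i
    set p : Fin q → Prop := fun s => s = i with hp
    haveI hu : Unique {s : Fin q // p s} :=
      ⟨⟨⟨i, rfl⟩⟩, by rintro ⟨s, hs⟩; exact Subtype.ext hs⟩
    have h1 := measurePreserving_piEquivPiSubtypeProd (fun _ : Fin q => P.prod P) p
    set e2 := MeasurableEquiv.funUnique {s : Fin q // p s} ((ℕ → A) × (ℕ → A)) with he2
    have h2 := measurePreserving_funUnique (P.prod P) {s : Fin q // p s}
    have hfin : (Unique.fintype : Fintype {s : Fin q // p s}) = Subtype.fintype p :=
      Subsingleton.elim _ _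
    rw [hfin] at h2
    set e1 := MeasurableEquiv.piEquivPiSubtypeProd (fun _ : Fin q => (ℕ → A) × (ℕ → A)) p with he1
    set ν₂ : Measure ({s : Fin q // ¬ p s} → (ℕ → A) × (ℕ → A)) :=
      Measure.pi fun _ => P.prod P with hν₂
    haveI hν₂prob : IsProbabilityMeasure ν₂ := by rw [hν₂]; infer_instance
    set Ψ := e1.trans (e2.prodCongr (MeasurableEquiv.refl _)) with hΨdef
    have hΨ : MeasurePreserving Ψ ν ((P.prod P).prod ν₂) :=
      (h2.prod (MeasurePreserving.id ν₂)).comp h1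
    have hΨsymm : ∀ (a : (ℕ → A) × (ℕ → A)) (b : {s : Fin q // ¬ p s} → (ℕ → A) × (ℕ → A)),
        Ψ.symm (a, b) = fun s => if hs : p s then a else b ⟨s, hs⟩ := by
      intro a b; rfl
    set Esec : ({s : Fin q // ¬ p s} → (ℕ → A) × (ℕ → A)) → Set (ℕ → A) :=
      fun b => {z | (fun s => if hs : p s then z else (b ⟨s, hs⟩).1) ∈ E} with hEsec
    set Gsec : ({s : Fin q // ¬ p s} → (ℕ → A) × (ℕ → A)) → Set (ℕ → A) :=
      fun b => {z | (fun s => if hs : p s then z else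
        shift^[m + n] (if (s : ℕ) < (i : ℕ) then (b ⟨s, hs⟩).2 else (b ⟨s, hs⟩).1)) ∈ F}
      with hGsec
    have hmeas_ins : ∀ (k : ∀ s : Fin q, ¬ p s → ℕ → A),
        Measurable (fun (z : ℕ → A) => fun s : Fin q => if hs : p s then z else k s hs) := by
      intro k
      apply measurable_pi_lambda
      intro s
      by_cases hs : p s
      · simp only [dif_pos hs]; exact measurable_id
      · simp only [dif_neg hs]; exact measurable_const
    have hEsec_m : ∀ b, MeasurableSet (Esec b) := fun b => (hmeas_ins _) hE
    have hGsec_m : ∀ b, MeasurableSet (Gsec b) := fun b => (hmeas_ins _) hF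
    have hEsec_comap : ∀ b, MeasurableSet[MeasurableSpace.comap
        (fun (x : ℕ → A) (j : Fin m) => x (j : ℕ)) MeasurableSpace.pi] (Esec b) := by
      intro b
      apply comap_measurableSet_of_dep
      intro z z' hzz' hz
      refine hEdep _ _ ?_ hz
      intro s j hj
      by_cases hs : p s
      · simp only [dif_pos hs]; exact hzz' j hj
      · simp only [dif_neg hs]
    have hslice1 : ∀ b, (fun a : (ℕ → A) × (ℕ → A) => (a, b)) ⁻¹' (Ψ.symm ⁻¹' S (i : ℕ))
        = ((Esec b ∩ shift^[m + n] ⁻¹' Gsec b) ×ˢ (univ : Set (ℕ → A))) := by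
      intro b
      ext a
      simp only [Set.mem_preimage, Set.mem_prod, Set.mem_univ, and_true, Set.mem_inter_iff]
      rw [hΨsymm a b]
      set w : Fin q → (ℕ → A) × (ℕ → A) := fun s => if hs : p s then a else b ⟨s, hs⟩ with hwdef
      have hxvw : xv w = fun s => if hs : p s then a.1 else (b ⟨s, hs⟩).1 := by
        funext s
        show (w s).1 = _
        rw [hwdef]
        exact apply_dite Prod.fst (p s) _ _
      have hzvi : zv (i : ℕ) w = fun s => if hs : p s then a.1 else
          (if (s : ℕ) < (i : ℕ) then (b ⟨s, hs⟩).2 else (b ⟨s, hs⟩).1) := by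
        funext s
        show (if (s : ℕ) < (i : ℕ) then (w s).2 else (w s).1) = _
        by_cases hs : p s
        · have hsi : (s : ℕ) = (i : ℕ) := by rw [hs]
          rw [dif_pos hs, hsi, if_neg (lt_irrefl _)]
          show (w s).1 = a.1
          rw [hwdef]; simp only [dif_pos hs]
        · rw [dif_neg hs]
          have hws : w s = b ⟨s, hs⟩ := by rw [hwdef]; simp only [dif_neg hs]
          rw [hws]
      show (xv w ∈ E ∧ zv (i : ℕ) w ∈ F') ↔ _
      rw [hxvw, hzvi]
      have hshqz : shq (fun s => if hs : p s then a.1 else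
          (if (s : ℕ) < (i : ℕ) then (b ⟨s, hs⟩).2 else (b ⟨s, hs⟩).1))
          = fun s => if hs : p s then shift^[m + n] a.1 else
            shift^[m + n] (if (s : ℕ) < (i : ℕ) then (b ⟨s, hs⟩).2 else (b ⟨s, hs⟩).1) := by
        funext s
        exact apply_dite (shift^[m + n]) (p s) _ _
      constructor
      · rintro ⟨hE1, hF1⟩
        refine ⟨hE1, ?_⟩
        show shift^[m + n] a.1 ∈ Gsec b
        have : shq _ ∈ F := hF1
        rw [hshqz] at this
        exact this
      · rintro ⟨hE1, hF1⟩
        refine ⟨hE1, ?_⟩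
        show shq _ ∈ F
        rw [hshqz]
        exact hF1
    have hslice2 : ∀ b, (fun a : (ℕ → A) × (ℕ → A) => (a, b)) ⁻¹' (Ψ.symm ⁻¹' S ((i : ℕ) + 1))
        = ((Esec b) ×ˢ (shift^[m + n] ⁻¹' Gsec b)) := by
      intro b
      ext a
      simp only [Set.mem_preimage, Set.mem_prod]
      rw [hΨsymm a b]
      set w : Fin q → (ℕ → A) × (ℕ → A) := fun s => if hs : p s then a else b ⟨s, hs⟩ with hwdef
      have hxvw : xv w = fun s => if hs : p s then a.1 else (b ⟨s, hs⟩).1 := by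
        funext s
        show (w s).1 = _
        rw [hwdef]
        exact apply_dite Prod.fst (p s) _ _
      have hzvi : zv ((i : ℕ) + 1) w = fun s => if hs : p s then a.2 else
          (if (s : ℕ) < (i : ℕ) then (b ⟨s, hs⟩).2 else (b ⟨s, hs⟩).1) := by
        funext s
        show (if (s : ℕ) < (i : ℕ) + 1 then (w s).2 else (w s).1) = _
        by_cases hs : p s
        · have hsi : (s : ℕ) = (i : ℕ) := by rw [hs]
          rw [dif_pos hs, if_pos (by omega)]
          show (w s).2 = a.2
          rw [hwdef]; simp only [dif_pos hs]
        · rw [dif_neg hs]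
          have hne : (s : ℕ) ≠ (i : ℕ) := fun h => hs (Fin.ext h)
          have hws : w s = b ⟨s, hs⟩ := by rw [hwdef]; simp only [dif_neg hs]
          by_cases hlt : (s : ℕ) < (i : ℕ)
          · rw [if_pos (by omega), if_pos hlt, hws]
          · rw [if_neg (by omega), if_neg hlt, hws]
      show (xv w ∈ E ∧ zv ((i : ℕ) + 1) w ∈ F') ↔ _
      rw [hxvw, hzvi]
      have hshqz : shq (fun s => if hs : p s then a.2 else
          (if (s : ℕ) < (i : ℕ) then (b ⟨s, hs⟩).2 else (b ⟨s, hs⟩).1))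
          = fun s => if hs : p s then shift^[m + n] a.2 else
            shift^[m + n] (if (s : ℕ) < (i : ℕ) then (b ⟨s, hs⟩).2 else (b ⟨s, hs⟩).1) := by
        funext s
        exact apply_dite (shift^[m + n]) (p s) _ _
      constructor
      · rintro ⟨hE1, hF1⟩
        refine ⟨hE1, ?_⟩
        show shift^[m + n] a.2 ∈ Gsec b
        have : shq _ ∈ F := hF1
        rw [hshqz] at this
        exact this
      · rintro ⟨hE1, hF1⟩
        refine ⟨hE1, ?_⟩
        show shq _ ∈ F
        rw [hshqz]
        exact hF1
    have hf1 : ∀ b, (P.prod P) ((fun a : (ℕ → A) × (ℕ → A) => (a, b)) ⁻¹' (Ψ.symm ⁻¹' S (i : ℕ)))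
        = P (Esec b ∩ shift^[m + n] ⁻¹' Gsec b) := by
      intro b
      rw [hslice1 b, Measure.prod_prod, measure_univ, mul_one]
    have hf2 : ∀ b, (P.prod P)
        ((fun a : (ℕ → A) × (ℕ → A) => (a, b)) ⁻¹' (Ψ.symm ⁻¹' S ((i : ℕ) + 1)))
        = P (Esec b) * P (Gsec b) := by
      intro b
      rw [hslice2 b, Measure.prod_prod, hshiftmp.measure_preimage (hGsec_m b).nullMeasurableSet]
    have hTrep : ∀ j, T j
        = ∫ b, ((P.prod P) ((fun a : (ℕ → A) × (ℕ → A) => (a, b)) ⁻¹' (Ψ.symm ⁻¹' S j))).toReal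
            ∂ν₂ := by
      intro j
      have hmeasS : MeasurableSet (Ψ.symm ⁻¹' S j) := Ψ.symm.measurable (hSm j)
      have h5 : ν (S j) = ((P.prod P).prod ν₂) (Ψ.symm ⁻¹' S j) := by
        rw [← hΨ.map_eq, Measure.map_apply hΨ.measurable hmeasS]
        congr 1
        ext w
        simp [Set.mem_preimage]
      show (ν (S j)).toReal = _
      rw [h5, Measure.prod_apply_symm hmeasS,
        ← integral_toReal (measurable_measure_prodMk_right hmeasS).aemeasurable
          (Filter.Eventually.of_forall fun b => measure_lt_top _ _)]
    have hint : ∀ j, Integrable (fun b =>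
        ((P.prod P) ((fun a : (ℕ → A) × (ℕ → A) => (a, b)) ⁻¹' (Ψ.symm ⁻¹' S j))).toReal) ν₂ := by
      intro j
      have hmeasS : MeasurableSet (Ψ.symm ⁻¹' S j) := Ψ.symm.measurable (hSm j)
      apply Integrable.mono' (integrable_const (1 : ℝ))
      · exact ((measurable_measure_prodMk_right hmeasS).ennreal_toReal).aestronglyMeasurable
      · apply Filter.Eventually.of_forall
        intro b
        rw [Real.norm_eq_abs, abs_of_nonneg ENNReal.toReal_nonneg]
        simpa using ENNReal.toReal_mono ENNReal.one_ne_top prob_le_one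
    have hpt : ∀ b, |((P.prod P)
          ((fun a : (ℕ → A) × (ℕ → A) => (a, b)) ⁻¹' (Ψ.symm ⁻¹' S (i : ℕ)))).toReal
        - ((P.prod P)
          ((fun a : (ℕ → A) × (ℕ → A) => (a, b)) ⁻¹' (Ψ.symm ⁻¹' S ((i : ℕ) + 1)))).toReal|
        ≤ α n := by
      intro b
      rw [hf1 b, hf2 b, ENNReal.toReal_mul]
      exact hmix m n hm hn (Esec b) (Gsec b) (hEsec_comap b) (hGsec_m b)
    rw [hTrep (i : ℕ), hTrep ((i : ℕ) + 1), ← integral_sub (hint _) (hint _)]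
    calc |∫ b, (((P.prod P)
            ((fun a : (ℕ → A) × (ℕ → A) => (a, b)) ⁻¹' (Ψ.symm ⁻¹' S (i : ℕ)))).toReal
          - ((P.prod P)
            ((fun a : (ℕ → A) × (ℕ → A) => (a, b)) ⁻¹' (Ψ.symm ⁻¹' S ((i : ℕ) + 1)))).toReal) ∂ν₂|
        ≤ ∫ b, ‖(((P.prod P)
            ((fun a : (ℕ → A) × (ℕ → A) => (a, b)) ⁻¹' (Ψ.symm ⁻¹' S (i : ℕ)))).toReal
          - ((P.prod P)
            ((fun a : (ℕ → A) × (ℕ → A) => (a, b)) ⁻¹' (Ψ.symm ⁻¹' S ((i : ℕ) + 1)))).toReal)‖ ∂ν₂ := by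
          simpa [Real.norm_eq_abs] using norm_integral_le_integral_norm
            (fun b => (((P.prod P)
              ((fun a : (ℕ → A) × (ℕ → A) => (a, b)) ⁻¹' (Ψ.symm ⁻¹' S (i : ℕ)))).toReal
            - ((P.prod P)
              ((fun a : (ℕ → A) × (ℕ → A) => (a, b)) ⁻¹' (Ψ.symm ⁻¹' S ((i : ℕ) + 1)))).toReal))
            (μ := ν₂)
      _ ≤ ∫ _b, α n ∂ν₂ := by
          apply integral_mono ((hint _).sub (hint _)).norm (integrable_const _)
          intro b
          simp only [Real.norm_eq_abs]
          exact hpt b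
      _ = α n := by simp
  -- assemble
  have htel : T 0 - T q = ∑ i ∈ Finset.range q, (T i - T (i + 1)) :=
    (Finset.sum_range_sub' T q).symm
  have hgoal :
      |((Measure.pi fun _ : Fin q => P)
        (E ∩ (fun x s => shift^[m + n] (x s)) ⁻¹' F)).toReal
      - ((Measure.pi fun _ : Fin q => P) E).toReal *
        ((Measure.pi fun _ : Fin q => P) F).toReal| = |T 0 - T q| := by
    rw [hT0, hTq]
  rw [hgoal, htel]
  calc |∑ i ∈ Finset.range q, (T i - T (i + 1))|
      ≤ ∑ i ∈ Finset.range q, |T i - T (i + 1)| := Finset.abs_sum_le_sum_abs _ _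
    _ ≤ ∑ _i ∈ Finset.range q, α n := by
        apply Finset.sum_le_sum
        intro i hi
        exact hstep ⟨i, Finset.mem_range.mp hi⟩
    _ = (q : ℝ) * α n := by
        simp [Finset.sum_const, nsmul_eq_mul]


end Mixing

/-- the Д₁(uₙ)-type mixing bound for the matching process under exponential
α-mixing. -/
theorem D1_mixing_bound
    {A : Type*} [Fintype A] [Nonempty A] [MeasurableSpace A] [MeasurableSingletonClass A]
    (P : Measure (ℕ → A)) [IsProbabilityMeasure P]
    (hinv : P.map shift = P)
    (α : ℕ → ℝ) (hmix : AlphaMixing P α)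
    (q : ℕ) [NeZero q] (hq : 2 ≤ q) (Hq : ℝ) (hHq_pos : 0 < Hq)
    (hHq : Tendsto (fun k : ℕ =>
        Real.log (∑ w : Fin k → A, (P (cyl w)).toReal ^ q) / ((1 - (q : ℝ)) * (k : ℝ)))
      atTop (𝓝 Hq))
    (β κ : ℝ) (hβ : 0 < β) (hκ : 0 < κ)
    (hα : ∀ n : ℕ, 1 ≤ n → α n ≤ β * Real.exp (-κ * n))
    (C₂ : ℝ) (hC₂ : 0 < C₂)
    (hC₂bound : ∀ u : ℕ, 1 ≤ u →
      ((Measure.pi fun _ : Fin q => P)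
          {x : Fin q → ℕ → A | ((u : ℕ) : ℕ∞) < Ymatch 0 x}).toReal
        ≤ C₂ * Real.exp (-(((q : ℝ) - 1) * Hq) * u))
    (s : ℝ) :
    ∃ C₅ : ℝ, 0 < C₅ ∧ ∀ n t l : ℕ, 1 ≤ n → 1 ≤ t → 1 ≤ l →
      |((Measure.pi fun _ : Fin q => P)
          (Aev q ⌊(Real.log n + s) / (((q : ℝ) - 1) * Hq)⌋₊ ∩
            Bev q ⌊(Real.log n + s) / (((q : ℝ) - 1) * Hq)⌋₊ t l)).toReal
        - ((Measure.pi fun _ : Fin q => P)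
            (Aev q ⌊(Real.log n + s) / (((q : ℝ) - 1) * Hq)⌋₊)).toReal *
          ((Measure.pi fun _ : Fin q => P)
            (Bev q ⌊(Real.log n + s) / (((q : ℝ) - 1) * Hq)⌋₊ 0 l)).toReal|
      ≤ (q : ℝ) * β * Real.exp (-κ * ((t : ℝ) / 2 - 1))
        + C₅ * Real.exp (-((t : ℝ) / 2 - 1) * (((q : ℝ) - 1) * Hq)) := by
  classical
  have hq1 : (2 : ℝ) ≤ (q : ℝ) := by exact_mod_cast hq
  set τ : ℝ := ((q : ℝ) - 1) * Hq with hτ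
  have hτpos : 0 < τ := mul_pos (by linarith) hHq_pos
  set μq := (Measure.pi fun _ : Fin q => P) with hμq
  haveI : IsProbabilityMeasure μq := by rw [hμq]; infer_instance
  have hle1 : ∀ S : Set (Fin q → ℕ → A), (μq S).toReal ≤ 1 := fun S => by
    simpa using ENNReal.toReal_mono ENNReal.one_ne_top prob_le_one
  have hnn : ∀ S : Set (Fin q → ℕ → A), 0 ≤ (μq S).toReal := fun S => ENNReal.toReal_nonneg
  have hmono : ∀ S1 S2 : Set (Fin q → ℕ → A), S1 ⊆ S2 → (μq S1).toReal ≤ (μq S2).toReal :=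
    fun S1 S2 h => ENNReal.toReal_mono (measure_ne_top _ _) (measure_mono h)
  refine ⟨2 * C₂ + 2, by positivity, ?_⟩
  intro n t l hn ht hl
  set u : ℕ := ⌊(Real.log n + s) / τ⌋₊ with hu
  have hfirst_nonneg : 0 ≤ (q : ℝ) * β * Real.exp (-κ * ((t : ℝ) / 2 - 1)) := by positivity
  have hsecond_nonneg : 0 ≤ (2 * C₂ + 2) * Real.exp (-((t : ℝ) / 2 - 1) * τ) := by positivity
  have htriv : |(μq (Aev q u ∩ Bev q u t l)).toReal
      - (μq (Aev q u)).toReal * (μq (Bev q u 0 l)).toReal| ≤ 2 := by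
    have h1 := hnn (Aev q u ∩ Bev q u t l)
    have h2 := hle1 (Aev q u ∩ Bev q u t l)
    have h3 := hnn (Aev q u)
    have h4 := hle1 (Aev q u)
    have h5 := hnn (Bev q u 0 l)
    have h6 := hle1 (Bev q u 0 l)
    rw [abs_le]
    constructor <;> nlinarith
  by_cases hcase : 2 * u + 2 ≤ t
  · by_cases hcase2 : u + 3 ≤ t
    · -- mixing case
      have hmn : (u + 2) + (t - u - 2) = t := by omega
      have hmix2 := prod_mixing P hinv α hmix q (u + 2) (t - u - 2) (by omega) (by omega)
        (Aev q u) (Bev q u 0 l)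
        (fun x y hxy hx => Aev_dep x y hxy hx)
        (measurableSet_of_dep (M := 0 + l + u + 1) (fun x y hxy hx => Bev_dep x y hxy hx))
      rw [hmn] at hmix2
      rw [show Bev q u t l
        = (fun (x : Fin q → ℕ → A) (s : Fin q) => shift^[t] (x s)) ⁻¹' Bev q u 0 l
        from Bev_shift]
      have hn'cast : ((t - u - 2 : ℕ) : ℝ) = (t : ℝ) - (u : ℝ) - 2 := by
        have h1 : (t - u - 2 : ℕ) + (u + 2) = t := by omega
        have h2 := congrArg (fun k : ℕ => (k : ℝ)) h1
        push_cast at h2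
        linarith
      calc |(μq (Aev q u ∩ (fun (x : Fin q → ℕ → A) (s : Fin q) => shift^[t] (x s)) ⁻¹'
              Bev q u 0 l)).toReal
            - (μq (Aev q u)).toReal * (μq (Bev q u 0 l)).toReal|
          ≤ (q : ℝ) * α (t - u - 2) := hmix2
        _ ≤ (q : ℝ) * (β * Real.exp (-κ * ((t - u - 2 : ℕ) : ℝ))) := by
            apply mul_le_mul_of_nonneg_left (hα _ (by omega)) (by positivity)
        _ ≤ (q : ℝ) * (β * Real.exp (-κ * ((t : ℝ) / 2 - 1))) := by
            have hexp : Real.exp (-κ * ((t - u - 2 : ℕ) : ℝ))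
                ≤ Real.exp (-κ * ((t : ℝ) / 2 - 1)) := by
              apply Real.exp_le_exp.mpr
              rw [hn'cast]
              have hc : (2 * (u : ℝ) + 2) ≤ (t : ℝ) := by exact_mod_cast hcase
              nlinarith [hκ.le]
            exact mul_le_mul_of_nonneg_left
              (mul_le_mul_of_nonneg_left hexp hβ.le) (by positivity)
        _ = (q : ℝ) * β * Real.exp (-κ * ((t : ℝ) / 2 - 1)) := by ring
        _ ≤ _ := le_add_of_nonneg_right hsecond_nonneg
    · -- u = 0, t = 2
      have hu0 : u = 0 := by omega
      have ht2 : t = 2 := by omega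
      have hexp : Real.exp (-((t : ℝ) / 2 - 1) * τ) = 1 := by
        rw [ht2]; norm_num
      calc |(μq (Aev q u ∩ Bev q u t l)).toReal
            - (μq (Aev q u)).toReal * (μq (Bev q u 0 l)).toReal| ≤ 2 := htriv
        _ ≤ (2 * C₂ + 2) * Real.exp (-((t : ℝ) / 2 - 1) * τ) := by
            rw [hexp]; linarith
        _ ≤ _ := le_add_of_nonneg_left hfirst_nonneg
  · by_cases hu1 : 1 ≤ u
    · -- C₂ case
      have hAsub : Aev q u ⊆ {x : Fin q → ℕ → A | ((u : ℕ) : ℕ∞) < Ymatch 0 x} :=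
        fun x hx => hx.1
      have hA : (μq (Aev q u)).toReal ≤ C₂ * Real.exp (-τ * u) := by
        calc (μq (Aev q u)).toReal
            ≤ (μq {x : Fin q → ℕ → A | ((u : ℕ) : ℕ∞) < Ymatch 0 x}).toReal := hmono _ _ hAsub
          _ ≤ C₂ * Real.exp (-τ * u) := hC₂bound u hu1
      have hbound : |(μq (Aev q u ∩ Bev q u t l)).toReal
          - (μq (Aev q u)).toReal * (μq (Bev q u 0 l)).toReal|
          ≤ 2 * (μq (Aev q u)).toReal := by
        calc |(μq (Aev q u ∩ Bev q u t l)).toReal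
            - (μq (Aev q u)).toReal * (μq (Bev q u 0 l)).toReal|
            ≤ |(μq (Aev q u ∩ Bev q u t l)).toReal|
              + |(μq (Aev q u)).toReal * (μq (Bev q u 0 l)).toReal| := abs_sub _ _
          _ ≤ (μq (Aev q u)).toReal + (μq (Aev q u)).toReal * 1 := by
              apply add_le_add
              · rw [abs_of_nonneg (hnn _)]
                exact hmono _ _ Set.inter_subset_left
              · rw [abs_of_nonneg (mul_nonneg (hnn _) (hnn _))]
                exact mul_le_mul_of_nonneg_left (hle1 _) (hnn _)
          _ = 2 * (μq (Aev q u)).toReal := by ring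
      have hute : ((t : ℝ) / 2 - 1) ≤ (u : ℝ) := by
        have hc : (t : ℝ) ≤ 2 * u + 1 := by exact_mod_cast (by omega : t ≤ 2 * u + 1)
        linarith
      calc |(μq (Aev q u ∩ Bev q u t l)).toReal
            - (μq (Aev q u)).toReal * (μq (Bev q u 0 l)).toReal|
          ≤ 2 * (μq (Aev q u)).toReal := hbound
        _ ≤ 2 * (C₂ * Real.exp (-τ * u)) := by linarith
        _ = 2 * C₂ * Real.exp (-τ * u) := by ring
        _ ≤ 2 * C₂ * Real.exp (-((t : ℝ) / 2 - 1) * τ) := by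
            have hexp : Real.exp (-τ * u) ≤ Real.exp (-((t : ℝ) / 2 - 1) * τ) := by
              apply Real.exp_le_exp.mpr
              nlinarith [hτpos.le, hute]
            exact mul_le_mul_of_nonneg_left hexp (by positivity)
        _ ≤ (2 * C₂ + 2) * Real.exp (-((t : ℝ) / 2 - 1) * τ) := by
            have := Real.exp_pos (-((t : ℝ) / 2 - 1) * τ)
            nlinarith
        _ ≤ _ := le_add_of_nonneg_left hfirst_nonneg
    · -- u = 0, t = 1
      have hu0 : u = 0 := by omega
      have ht1 : t = 1 := by omega
      have hexp : (1 : ℝ) ≤ Real.exp (-((t : ℝ) / 2 - 1) * τ) := by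
        apply Real.one_le_exp
        rw [ht1]
        nlinarith [hτpos.le]
      calc |(μq (Aev q u ∩ Bev q u t l)).toReal
            - (μq (Aev q u)).toReal * (μq (Bev q u 0 l)).toReal| ≤ 2 := htriv
        _ ≤ (2 * C₂ + 2) * Real.exp (-((t : ℝ) / 2 - 1) * τ) := by nlinarith
        _ ≤ _ := le_add_of_nonneg_left hfirst_nonneg


end Stmt16
end
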